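/- For every positive integer n, the following identity of rational functions in q holds: ∑_{k=1}^{n} ( (1 + q^k + q^{2k}) · q^{−C(k,2)} / ((1+q^k)^2 · [k]_q) ) · binom_q(2k, k) = ∑_{k=1}^{n} ( q^{−C(k,2)} / [k]_q ) · binom_q(n+k, k) · binom_q(n, k)^{−1} − ∑_{k=1}^{n} q^k / [2k]_q. -/

import Mathlib

open Polynomial Finset

noncomputable section

/-- The `q`-integer `[n]_q = 1 + q + ⋯ + q^(n-1)`, as a polynomial in `ℚ[q]`. -/
def qIntP (n : ℕ) : Polynomial ℚ := ∑ i ∈ Finset.range n, X ^ i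

/-- The `q`-integer `[n]_q` viewed in the field of rational functions `ℚ(q)`. -/
def qN (n : ℕ) : RatFunc ℚ := algebraMap (Polynomial ℚ) (RatFunc ℚ) (qIntP n)

/-- The `q`-Pochhammer symbol `(q; q)_n = ∏_{j=1}^{n} (1 - q^j)` in `ℚ(q)`. -/
def qqPoch (n : ℕ) : RatFunc ℚ :=
  algebraMap (Polynomial ℚ) (RatFunc ℚ) (∏ j ∈ Finset.range n, (1 - X ^ (j + 1)))

/-- The `q`-Pochhammer symbol `(-q; q)_n = ∏_{j=1}^{n} (1 + q^j)` in `ℚ(q)`. -/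
def nqPoch (n : ℕ) : RatFunc ℚ :=
  algebraMap (Polynomial ℚ) (RatFunc ℚ) (∏ j ∈ Finset.range n, (1 + X ^ (j + 1)))

/-- The Gaussian `q`-binomial coefficient, as a rational function. -/
def qbin (n k : ℕ) : RatFunc ℚ :=
  if k ≤ n then qqPoch n / (qqPoch k * qqPoch (n - k)) else 0

/-- `qCong p r x y` means `x ≡ y (mod [p]_q^r)`: the difference `x - y` can be
written as a fraction whose numerator (a polynomial) is divisible by `[p]_q^r`
and whose denominator is relatively prime to `[p]_q`. -/
def qCong (p r : ℕ) (x y : RatFunc ℚ) : Prop :=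
  ∃ a b : Polynomial ℚ, IsCoprime b (qIntP p) ∧
    (x - y) * algebraMap (Polynomial ℚ) (RatFunc ℚ) b =
      algebraMap (Polynomial ℚ) (RatFunc ℚ) (qIntP p ^ r * a)

abbrev FF := RatFunc ℚ
abbrev φ := algebraMap (Polynomial ℚ) FF

lemma φinj : Function.Injective φ := RatFunc.algebraMap_injective ℚ

lemma t_ne : (RatFunc.X : FF) ≠ 0 := RatFunc.X_ne_zero

lemma one_sub_pow_ne (m : ℕ) (hm : 1 ≤ m) : (1 : FF) - RatFunc.X ^ m ≠ 0 := by
  have h : (1 : FF) - RatFunc.X ^ m = φ (1 - X ^ m) := by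
    simp [map_sub, map_pow, RatFunc.algebraMap_X]
  rw [h]
  intro hc
  have hp : ((1 : ℚ[X]) - X ^ m) = 0 := φinj (by simpa using hc)
  have h2 : ((1 : ℚ[X]) - X ^ m).coeff m = 0 := by rw [hp]; simp
  rw [Polynomial.coeff_sub, Polynomial.coeff_one, Polynomial.coeff_X_pow] at h2
  rw [if_neg (by omega : ¬ m = 0), if_pos rfl] at h2
  norm_num at h2

lemma one_add_pow_ne (m : ℕ) (hm : 1 ≤ m) : (1 : FF) + RatFunc.X ^ m ≠ 0 := by
  have h : (1 : FF) + RatFunc.X ^ m = φ (1 + X ^ m) := by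
    simp [map_add, map_pow, RatFunc.algebraMap_X]
  rw [h]
  intro hc
  have hp : ((1 : ℚ[X]) + X ^ m) = 0 := φinj (by simpa using hc)
  have h2 : ((1 : ℚ[X]) + X ^ m).coeff m = 0 := by rw [hp]; simp
  rw [Polynomial.coeff_add, Polynomial.coeff_one, Polynomial.coeff_X_pow] at h2
  rw [if_neg (by omega : ¬ m = 0), if_pos rfl] at h2
  norm_num at h2

lemma qN_ne (k : ℕ) (hk : 1 ≤ k) : qN k ≠ 0 := by
  rw [qN, ne_eq]
  intro hc
  have hp : qIntP k = 0 := φinj (by simpa using hc)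
  have : (qIntP k).eval 1 = 0 := by rw [hp]; simp
  rw [qIntP, Polynomial.eval_finset_sum] at this
  simp at this
  omega

lemma geom_qN (k : ℕ) : (1 - RatFunc.X) * qN k = 1 - RatFunc.X ^ k := by
  have h := geom_sum_mul (X : ℚ[X]) k
  have h2 := congrArg φ h
  simp only [map_mul, map_sub, map_pow, map_one, RatFunc.algebraMap_X] at h2
  rw [qN, qIntP]
  linear_combination -h2

lemma qN_eq (k : ℕ) : qN k = (1 - RatFunc.X ^ k) / (1 - RatFunc.X) := by
  rw [eq_div_iff (one_sub_pow_ne 1 le_rfl |>.imp (by simp))]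
  · rw [mul_comm]; exact geom_qN k

lemma qqPoch_succ (n : ℕ) : qqPoch (n + 1) = qqPoch n * (1 - RatFunc.X ^ (n + 1)) := by
  rw [qqPoch, qqPoch, Finset.prod_range_succ, map_mul]
  congr 1
  simp [map_sub, map_pow, RatFunc.algebraMap_X]

lemma qqPoch_zero : qqPoch 0 = 1 := by simp [qqPoch]

lemma qqPoch_ne (n : ℕ) : qqPoch n ≠ 0 := by
  induction n with
  | zero => simp [qqPoch_zero]
  | succ m ih =>
    rw [qqPoch_succ]
    exact mul_ne_zero ih (one_sub_pow_ne (m+1) (by omega))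

def Zc (k : ℕ) : FF := (RatFunc.X : FF) ^ (-(k.choose 2 : ℤ))
def fnk (n k : ℕ) : FF := qqPoch (n+k) * qqPoch (n-k) / qqPoch n ^ 2
def Bnk (n k : ℕ) : FF := Zc k / qN k * fnk n k
def gnk (n k : ℕ) : FF :=
  -(1 - RatFunc.X) * Zc k *
    (RatFunc.X ^ (n+1) * (RatFunc.X ^ (n+1) - RatFunc.X ^ k)) /
      (RatFunc.X ^ k * (1 - RatFunc.X ^ (n+1))^2 * (1 + RatFunc.X ^ (n+1))) * fnk n k

lemma Zc_ne (k : ℕ) : Zc k ≠ 0 := zpow_ne_zero _ t_ne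

lemma Zc_succ (k : ℕ) : Zc (k+1) = Zc k / RatFunc.X ^ k := by
  have h : (k+1).choose 2 = k.choose 2 + k := by
    simp [Nat.choose_succ_succ, Nat.choose_one_right, Nat.add_comm]
  rw [Zc, Zc, h, eq_div_iff (pow_ne_zero k t_ne), ← zpow_natCast (RatFunc.X : FF) k,
    ← zpow_add₀ t_ne]
  congr 1
  push_cast
  ring

set_option maxHeartbeats 1000000 in
lemma L1 (n k : ℕ) (hk : 1 ≤ k) (hkn : k + 1 ≤ n) :
    Bnk (n+1) k - Bnk n k = gnk n k - gnk n (k+1) := by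
  have e1 : qqPoch (n+1+k) = qqPoch (n+k) * (1 - RatFunc.X ^ (n+k+1)) := by
    rw [(by omega : n+1+k = (n+k)+1)]; exact qqPoch_succ (n+k)
  have e2 : qqPoch (n+1-k) = qqPoch (n-k) * (1 - RatFunc.X ^ (n-k+1)) := by
    rw [(by omega : n+1-k = (n-k)+1)]; exact qqPoch_succ (n-k)
  have e3 : qqPoch (n+1) = qqPoch n * (1 - RatFunc.X ^ (n+1)) := qqPoch_succ n
  have e4 : qqPoch (n-k) = qqPoch (n-(k+1)) * (1 - RatFunc.X ^ (n-k)) := by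
    rw [(by omega : n-k = (n-(k+1))+1)]; exact qqPoch_succ (n-(k+1))
  have e5 : qqPoch (n+(k+1)) = qqPoch (n+k) * (1 - RatFunc.X ^ (n+k+1)) := by
    rw [(by omega : n+(k+1) = (n+k)+1)]; exact qqPoch_succ (n+k)
  have ha : (RatFunc.X : FF) ^ k ≠ 0 := pow_ne_zero _ t_ne
  have hc : (RatFunc.X : FF) ^ (n-k) ≠ 0 := pow_ne_zero _ t_ne
  have h1t : (1 : FF) - RatFunc.X ≠ 0 := by
    have := one_sub_pow_ne 1 le_rfl; rwa [pow_one] at this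
  have h1a : (1 : FF) - RatFunc.X ^ k ≠ 0 := one_sub_pow_ne k hk
  have h1c : (1 : FF) - RatFunc.X ^ (n-k) ≠ 0 := one_sub_pow_ne (n-k) (by omega)
  have h1n : (1 : FF) - RatFunc.X ^ (n+1) ≠ 0 := one_sub_pow_ne (n+1) (by omega)
  have h2n : (1 : FF) + RatFunc.X ^ (n+1) ≠ 0 := one_add_pow_ne (n+1) (by omega)
  have hPnk : qqPoch (n+k) ≠ 0 := qqPoch_ne _
  have hPn : qqPoch n ≠ 0 := qqPoch_ne _
  have hPm : qqPoch (n-(k+1)) ≠ 0 := qqPoch_ne _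
  have p1 : (RatFunc.X : FF) ^ (n+k+1) = RatFunc.X ^ (n-k) * RatFunc.X ^ k * RatFunc.X ^ k * RatFunc.X := by
    rw [← pow_add, ← pow_add, ← pow_succ]; congr 1; omega
  have p2 : (RatFunc.X : FF) ^ (n-k+1) = RatFunc.X ^ (n-k) * RatFunc.X := pow_succ _ _
  have p3 : (RatFunc.X : FF) ^ (n+1) = RatFunc.X ^ (n-k) * RatFunc.X ^ k * RatFunc.X := by
    rw [← pow_add, ← pow_succ]; congr 1; omega
  have p4 : (RatFunc.X : FF) ^ (k+1) = RatFunc.X ^ k * RatFunc.X := pow_succ _ _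
  rw [p3] at h1n h2n
  set q : FF := RatFunc.X with hq
  set a : FF := RatFunc.X ^ k with hqa
  set c : FF := RatFunc.X ^ (n-k) with hqc
  set Z : FF := Zc k with hZ
  set P1 : FF := qqPoch (n+k) with hP1
  set P2 : FF := qqPoch (n-(k+1)) with hP2
  set P3 : FF := qqPoch n with hP3
  have hZne : Z ≠ 0 := Zc_ne k
  have hqne : q ≠ 0 := t_ne
  set D : FF := q * a * (1-a) * (1 - c*a*q)^2 * (1 + c*a*q) * P3^2 with hD
  have hDne : D ≠ 0 := by
    rw [hD]
    exact mul_ne_zero (mul_ne_zero (mul_ne_zero (mul_ne_zero (mul_ne_zero t_ne ha) h1a)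
      (pow_ne_zero _ h1n)) h2n) (pow_ne_zero _ hPn)
  have TB1 : Bnk (n+1) k
      = Z*(1-q)*P1*(1 - c*a*a*q)*P2*(1-c)*(1 - c*q)*a*q*(1 + c*a*q) / D := by
    rw [Bnk, fnk, e1, e2, e3, e4, qN_eq, p1, p2, p3, eq_div_iff hDne, hD]
    rw [← hqa]
    simp only [← hq, ← hZ, ← hP1, ← hP3]
    clear_value D P1 P2 P3 Z c a q
    field_simp
    field_simp [show (1:FF) - a*q*c ≠ 0 by rwa [show a*q*c = c*a*q by ring]]
  have TB2 : Bnk n k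
      = Z*(1-q)*P1*P2*(1-c)*a*q*(1 - c*a*q)^2*(1 + c*a*q) / D := by
    rw [Bnk, fnk, e4, qN_eq, eq_div_iff hDne, hD]
    rw [← hqa]
    simp only [← hq, ← hZ, ← hP1, ← hP3]
    clear_value D P1 P2 P3 Z c a q
    field_simp
  have TG1 : gnk n k
      = -((1-q)*Z*(c*a*q)*(c*a*q - a)*P1*P2*(1-c)*q*(1-a)) / D := by
    rw [gnk, fnk, e4, p3, eq_div_iff hDne, hD]
    rw [← hqa]
    simp only [← hq, ← hZ, ← hP1, ← hP3]
    clear_value D P1 P2 P3 Z c a q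
    rw [div_mul_div_comm, div_mul_eq_mul_div, div_eq_iff (mul_ne_zero (mul_ne_zero
      (mul_ne_zero ha (pow_ne_zero _ h1n)) h2n) (pow_ne_zero _ hPn))]
    ring
  have hZrel : Zc (k+1) * a = Z := by rw [Zc_succ, div_mul_cancel₀ _ ha]
  have hBP : a*q * (1 - c*a*q)^2 * (1 + c*a*q) * P3^2 ≠ 0 :=
    mul_ne_zero (mul_ne_zero (mul_ne_zero (mul_ne_zero ha hqne) (pow_ne_zero _ h1n)) h2n)
      (pow_ne_zero _ hPn)
  have TG2 : gnk n (k+1)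
      = -((1-q)*(Zc (k+1))*(c*a*q)*(c*a*q - a*q)*P1*(1 - c*a*a*q)*P2*(1-a)) / D := by
    rw [gnk, fnk, e5, p1, p3, p4, div_mul_div_comm, div_eq_div_iff hBP hDne, hD]
    ring
  rw [TB1, TB2, TG1, TG2, div_sub_div_same, div_sub_div_same]
  congr 1
  linear_combination (-((1-q)*(c*q)*(c*a*q - a*q)*P1*(1 - c*a*a*q)*P2*(1-a))) * hZrel

lemma qN_one : qN 1 = 1 := by
  simp [qN, qIntP]

lemma qqPoch_one : qqPoch 1 = 1 - RatFunc.X := by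
  have h := qqPoch_succ 0
  rwa [qqPoch_zero, one_mul, pow_one] at h

lemma Zc_one : Zc 1 = 1 := by
  norm_num [Zc]

lemma qbin_two (k : ℕ) : qbin (2*k) k = qqPoch (2*k) / (qqPoch k * qqPoch k) := by
  rw [qbin, if_pos (by omega : k ≤ 2*k), (by omega : 2*k - k = k)]

lemma Bterm_eq (n k : ℕ) (hk : 1 ≤ k) (hkn : k ≤ n) :
    Zc k / qN k * qbin (n+k) k * (qbin n k)⁻¹ = Bnk n k := by
  rw [qbin, if_pos (by omega : k ≤ n+k), (by omega : n+k-k = n), qbin, if_pos hkn, Bnk, fnk]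
  have h1 : qqPoch k ≠ 0 := qqPoch_ne _
  have h2 : qqPoch n ≠ 0 := qqPoch_ne _
  have h3 : qqPoch (n-k) ≠ 0 := qqPoch_ne _
  have h4 : qqPoch (n+k) ≠ 0 := qqPoch_ne _
  have h5 : qN k ≠ 0 := qN_ne k hk
  field_simp

lemma grp2 (n : ℕ) (hn : 1 ≤ n) : gnk n 1 = RatFunc.X ^ (n+1) / qN (2*(n+1)) := by
  have e6 := qqPoch_succ (n-1)
  rw [(by omega : n-1+1 = n)] at e6
  have e3 : qqPoch (n+1) = qqPoch n * (1 - RatFunc.X ^ (n+1)) := qqPoch_succ n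
  have hPm : qqPoch (n-1) ≠ 0 := qqPoch_ne _
  have h1t : (1 : FF) - RatFunc.X ≠ 0 := by
    have := one_sub_pow_ne 1 le_rfl; rwa [pow_one] at this
  have h1Q : (1 : FF) - RatFunc.X ^ n ≠ 0 := one_sub_pow_ne n hn
  have h1n : (1 : FF) - RatFunc.X ^ (n+1) ≠ 0 := one_sub_pow_ne (n+1) (by omega)
  have h2n : (1 : FF) + RatFunc.X ^ (n+1) ≠ 0 := one_add_pow_ne (n+1) (by omega)
  have h2m : (1 : FF) - RatFunc.X ^ (2*(n+1)) ≠ 0 := one_sub_pow_ne _ (by omega)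
  have hq2 : qN (2*(n+1)) ≠ 0 := qN_ne _ (by omega)
  have p3 : (RatFunc.X : FF) ^ (n+1) = RatFunc.X ^ n * RatFunc.X := pow_succ _ _
  have p5 : (RatFunc.X : FF) ^ (2*(n+1)) = RatFunc.X ^ n * RatFunc.X ^ n * RatFunc.X * RatFunc.X := by
    rw [← pow_add, ← pow_succ, ← pow_succ]; congr 1; omega
  rw [p3] at h1n h2n
  rw [p5] at h2m
  have hd1 : (RatFunc.X : FF) ^ 1 * (1 - RatFunc.X ^ n * RatFunc.X) ^ 2 *
      (1 + RatFunc.X ^ n * RatFunc.X) ≠ 0 :=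
    mul_ne_zero (mul_ne_zero (pow_ne_zero 1 t_ne) (pow_ne_zero 2 h1n)) h2n
  have hd2 : ((qqPoch (n-1)) * (1 - RatFunc.X ^ n)) ^ 2 ≠ 0 :=
    pow_ne_zero 2 (mul_ne_zero hPm h1Q)
  have hBig := mul_ne_zero (mul_ne_zero hd1 hd2) h1t
  rw [eq_div_iff hq2, gnk, fnk, Zc_one, e3, e6, qN_eq, p3, p5, div_mul_div_comm,
    div_mul_div_comm, div_eq_iff hBig]
  ring

def Ank (m : ℕ) : FF :=
  (1 + RatFunc.X ^ m + RatFunc.X ^ (2*m)) * Zc m /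
    ((1 + RatFunc.X ^ m) ^ 2 * qN m) * qbin (2*m) m

set_option maxHeartbeats 1000000 in
lemma grp1 (n : ℕ) (hn : 1 ≤ n) :
    Ank (n+1) = -(gnk n n) + (Bnk (n+1) n - Bnk n n) + Bnk (n+1) (n+1) := by
  rw [Ank]
  have w0 : qqPoch (2*n+1) = qqPoch (2*n) * (1 - RatFunc.X ^ (2*n+1)) := qqPoch_succ _
  have w1 : qqPoch (2*(n+1)) = qqPoch (2*n+1) * (1 - RatFunc.X ^ (2*n+2)) := by
    rw [(by omega : 2*(n+1) = (2*n+1)+1)]; exact qqPoch_succ _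
  have e3 : qqPoch (n+1) = qqPoch n * (1 - RatFunc.X ^ (n+1)) := qqPoch_succ n
  have a1 : qqPoch (n+n) = qqPoch (2*n) := by rw [two_mul]
  have a2 : qqPoch (n+1+n) = qqPoch (2*n+1) := by rw [(by omega : n+1+n = 2*n+1)]
  have a4 : qqPoch (n+1+(n+1)) = qqPoch (2*(n+1)) := by rw [(by omega : n+1+(n+1) = 2*(n+1))]
  have hQ : (RatFunc.X : FF) ^ n ≠ 0 := pow_ne_zero _ t_ne
  have h1t : (1 : FF) - RatFunc.X ≠ 0 := by
    have := one_sub_pow_ne 1 le_rfl; rwa [pow_one] at this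
  have h1Q : (1 : FF) - RatFunc.X ^ n ≠ 0 := one_sub_pow_ne n hn
  have h1n : (1 : FF) - RatFunc.X ^ (n+1) ≠ 0 := one_sub_pow_ne (n+1) (by omega)
  have h2n : (1 : FF) + RatFunc.X ^ (n+1) ≠ 0 := one_add_pow_ne (n+1) (by omega)
  have hW : qqPoch (2*n) ≠ 0 := qqPoch_ne _
  have hPn : qqPoch n ≠ 0 := qqPoch_ne _
  have p3 : (RatFunc.X : FF) ^ (n+1) = RatFunc.X ^ n * RatFunc.X := pow_succ _ _
  have p6 : (RatFunc.X : FF) ^ (2*n+1) = RatFunc.X ^ n * RatFunc.X ^ n * RatFunc.X := by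
    rw [← pow_add, ← pow_succ]; congr 1; omega
  have p7 : (RatFunc.X : FF) ^ (2*n+2) = RatFunc.X ^ n * RatFunc.X ^ n * RatFunc.X * RatFunc.X := by
    rw [← pow_add, ← pow_succ, ← pow_succ]; congr 1; omega
  have p8 : (RatFunc.X : FF) ^ (2*(n+1)) = RatFunc.X ^ n * RatFunc.X ^ n * RatFunc.X * RatFunc.X := by
    rw [← pow_add, ← pow_succ, ← pow_succ]; congr 1; omega
  rw [p3] at h1n h2n
  set q : FF := RatFunc.X with hq
  set Q : FF := RatFunc.X ^ n with hQQ
  set Z : FF := Zc n with hZ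
  set W : FF := qqPoch (2*n) with hW2
  set Pn : FF := qqPoch n with hPn2
  have hqne : q ≠ 0 := t_ne
  have hZne : Z ≠ 0 := Zc_ne n
  have hZ'ne : Zc (n+1) ≠ 0 := Zc_ne (n+1)
  have hZrel : Zc (n+1) * Q = Z := by rw [Zc_succ, div_mul_cancel₀ _ hQ]
  set D : FF := Q * (1-Q) * (1 - Q*q)^3 * (1 + Q*q)^2 * Pn^2 with hD
  have hDne : D ≠ 0 := by
    rw [hD]
    exact mul_ne_zero (mul_ne_zero (mul_ne_zero (mul_ne_zero hQ h1Q) (pow_ne_zero _ h1n))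
      (pow_ne_zero _ h2n)) (pow_ne_zero _ hPn)
  have TA : (1 + RatFunc.X ^ (n+1) + RatFunc.X ^ (2*(n+1))) * Zc (n+1) /
        ((1 + RatFunc.X ^ (n+1)) ^ 2 * qN (n+1)) * qbin (2*(n+1)) (n+1)
      = (1 + Q*q + Q*Q*q*q) * (1-q) * (1-Q) * W * (1 - Q*Q*q) * (1 - Q*Q*q*q)
          * Q * Zc (n+1) / D := by
    rw [qbin_two, w1, w0, e3, qN_eq, p3, p6, p7, p8, eq_div_iff hDne, hD]
    simp only [← hq]
    clear_value D Pn W Z Q q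
    field_simp [hqne, hQ, h1t, h1Q, h1n, h2n, hW, hPn, hZ'ne]
  have TG : gnk n n = -((1-q) * Z * (Q*q * (Q*q - Q)) * W * (1-Q) * (1 - Q*q) * (1 + Q*q)) / D := by
    rw [gnk, fnk, a1, Nat.sub_self, qqPoch_zero, p3, eq_div_iff hDne, hD]
    simp only [← hQQ, ← hZ, ← hW2, ← hPn2]
    simp only [← hq]
    clear_value D Pn W Z Q q
    field_simp [hqne, hQ, h1t, h1Q, h1n, h2n, hW, hPn, hZne]
  have TB1 : Bnk (n+1) n
      = Z * (1-q) * W * (1 - Q*Q*q) * (1-q) * Q * (1 - Q*q) * (1 + Q*q)^2 / D := by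
    rw [Bnk, fnk, a2, (by omega : n+1-n = 1), qqPoch_one, w0, e3, qN_eq, p3, p6,
      eq_div_iff hDne, hD]
    simp only [← hQQ, ← hZ, ← hW2, ← hPn2]
    simp only [← hq]
    clear_value D Pn W Z Q q
    field_simp [hqne, hQ, h1t, h1Q, h1n, h2n, hW, hPn, hZne]
  have TB2 : Bnk n n = Z * (1-q) * W * Q * (1 - Q*q)^3 * (1 + Q*q)^2 / D := by
    rw [Bnk, fnk, a1, Nat.sub_self, qqPoch_zero, qN_eq, eq_div_iff hDne, hD]
    simp only [← hQQ, ← hZ, ← hW2, ← hPn2]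
    simp only [← hq]
    clear_value D Pn W Z Q q
    field_simp [hqne, hQ, h1t, h1Q, h1n, h2n, hW, hPn, hZne]
  have TB3 : Bnk (n+1) (n+1)
      = Zc (n+1) * Q * ((1-q) * W * (1 - Q*Q*q) * (1 - Q*Q*q*q) * (1-Q) * (1 + Q*q)^2) / D := by
    rw [Bnk, fnk, a4, Nat.sub_self, qqPoch_zero, w1, w0, e3, qN_eq, p3, p6, p7,
      eq_div_iff hDne, hD]
    simp only [← hq]
    clear_value D Pn W Z Q q
    field_simp [hqne, hQ, h1t, h1Q, h1n, h2n, hW, hPn, hZ'ne]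
  rw [TA, TG, TB1, TB2, TB3, neg_div, neg_neg, div_sub_div_same, ← add_div,
    ← add_div]
  congr 1
  linear_combination ((1 + Q*q + Q*Q*q*q) * (1-q) * (1-Q) * W * (1 - Q*Q*q) * (1 - Q*Q*q*q)
    - (1-q) * W * (1 - Q*Q*q) * (1 - Q*Q*q*q) * (1-Q) * (1 + Q*q)^2) * hZrel

lemma tele_aux (f : ℕ → FF) : ∀ m, ∑ k ∈ Finset.Icc 1 m, (f k - f (k+1)) = f 1 - f (m+1)
  | 0 => by simp
  | m+1 => by
    rw [Finset.sum_Icc_succ_top (by omega : 1 ≤ m+1), tele_aux f m]; ring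

lemma tele (n : ℕ) (hn : 1 ≤ n) :
    ∑ k ∈ Finset.Icc 1 n, (Bnk (n+1) k - Bnk n k)
      = gnk n 1 - gnk n n + (Bnk (n+1) n - Bnk n n) := by
  obtain ⟨m, rfl⟩ : ∃ m, n = m + 1 := ⟨n - 1, by omega⟩
  rw [Finset.sum_Icc_succ_top (by omega : 1 ≤ m + 1)]
  congr 1
  have hcong : ∑ k ∈ Finset.Icc 1 m, (Bnk (m+1+1) k - Bnk (m+1) k)
      = ∑ k ∈ Finset.Icc 1 m, (gnk (m+1) k - gnk (m+1) (k+1)) := by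
    refine Finset.sum_congr rfl fun k hk => ?_
    rw [Finset.mem_Icc] at hk
    exact L1 (m+1) k hk.1 (by omega)
  rw [hcong, tele_aux (fun k => gnk (m+1) k) m]

lemma base_case : Ank 1 = Bnk 1 1 - RatFunc.X ^ 1 / qN (2*1) := by
  have e2 : qqPoch 2 = qqPoch 1 * (1 - RatFunc.X ^ 2) := by
    have h := qqPoch_succ 1
    norm_num at h
    exact h
  have h1t : (1 : FF) - RatFunc.X ≠ 0 := by
    have := one_sub_pow_ne 1 le_rfl; rwa [pow_one] at this
  have h12 : (1 : FF) - RatFunc.X ^ 2 ≠ 0 := one_sub_pow_ne 2 (by omega)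
  have h2 : (1 : FF) + RatFunc.X ≠ 0 := by
    have := one_add_pow_ne 1 le_rfl; rwa [pow_one] at this
  rw [Ank, Bnk, fnk, qbin_two]
  norm_num
  rw [e2, qqPoch_one, qqPoch_zero, Zc_one, qN_one, qN_eq]
  field_simp [h1t, h12, h2, t_ne]
  ring

lemma main (n : ℕ) (hn : 1 ≤ n) :
    ∑ k ∈ Finset.Icc 1 n, Ank k
      = ∑ k ∈ Finset.Icc 1 n, Bnk n k
        - ∑ k ∈ Finset.Icc 1 n, (RatFunc.X : FF) ^ k / qN (2*k) := by
  induction n, hn using Nat.le_induction with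
  | base => simpa using base_case
  | succ n hn ih =>
    rw [Finset.sum_Icc_succ_top (by omega : 1 ≤ n+1),
        Finset.sum_Icc_succ_top (by omega : 1 ≤ n+1),
        Finset.sum_Icc_succ_top (by omega : 1 ≤ n+1)]
    have hsum : ∑ k ∈ Finset.Icc 1 n, Bnk (n+1) k
        = ∑ k ∈ Finset.Icc 1 n, Bnk n k + (gnk n 1 - gnk n n + (Bnk (n+1) n - Bnk n n)) := by
      rw [← tele n hn, ← Finset.sum_add_distrib]
      exact Finset.sum_congr rfl fun k _ => by ring
    rw [hsum, ih, grp2 n hn]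
    linear_combination grp1 n hn

/-- For every positive integer `n`, the identity of rational functions:
`∑_{k=1}^{n} ((1+q^k+q^{2k}) q^{−C(k,2)}/((1+q^k)² [k]_q)) binom_q(2k,k)
  = ∑_{k=1}^{n} (q^{−C(k,2)}/[k]_q) binom_q(n+k,k) binom_q(n,k)⁻¹
    − ∑_{k=1}^{n} q^k/[2k]_q`. -/
theorem qid3 (n : ℕ) (hn : 0 < n) :
    ∑ k ∈ Finset.Icc 1 n,
        (1 + RatFunc.X ^ k + RatFunc.X ^ (2 * k)) *
          (RatFunc.X : RatFunc ℚ) ^ (-(k.choose 2 : ℤ)) /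
            ((1 + RatFunc.X ^ k) ^ 2 * qN k) * qbin (2 * k) k
      = ∑ k ∈ Finset.Icc 1 n,
          (RatFunc.X : RatFunc ℚ) ^ (-(k.choose 2 : ℤ)) / qN k *
            qbin (n + k) k * (qbin n k)⁻¹
        - ∑ k ∈ Finset.Icc 1 n, (RatFunc.X : RatFunc ℚ) ^ k / qN (2 * k) := by
  have h1 : ∑ k ∈ Finset.Icc 1 n,
      (1 + RatFunc.X ^ k + RatFunc.X ^ (2 * k)) *
        (RatFunc.X : RatFunc ℚ) ^ (-(k.choose 2 : ℤ)) /
          ((1 + RatFunc.X ^ k) ^ 2 * qN k) * qbin (2 * k) k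
      = ∑ k ∈ Finset.Icc 1 n, Ank k :=
    Finset.sum_congr rfl fun k _ => rfl
  have h2 : ∑ k ∈ Finset.Icc 1 n,
      (RatFunc.X : RatFunc ℚ) ^ (-(k.choose 2 : ℤ)) / qN k *
        qbin (n + k) k * (qbin n k)⁻¹
      = ∑ k ∈ Finset.Icc 1 n, Bnk n k :=
    Finset.sum_congr rfl fun k hk => by
      rw [Finset.mem_Icc] at hk
      exact Bterm_eq n k hk.1 hk.2
  have h3 : ∑ k ∈ Finset.Icc 1 n, (RatFunc.X : RatFunc ℚ) ^ k / qN (2 * k)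
      = ∑ k ∈ Finset.Icc 1 n, (RatFunc.X : FF) ^ k / qN (2*k) := rfl
  rw [h1, h2, h3]
  exact main n hn
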